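/- Let σ ∈ S_n and let τ = (v, π) ∈ B_n commute with (0, σ). Since π commutes with σ, the group generated by π permutes the orbits of σ on Fin n; let O₁, …, O_z be the orbits of this action on the set of σ-orbits, and for each y let I_y ⊆ Fin n be the union of the σ-orbits belonging to O_y, so that I₁, …, I_z partition Fin n and each I_y is π-invariant. Define τ_y = (v·𝟙_{I_y}, π_y) ∈ B_n, where v·𝟙_{I_y} agrees with v on I_y and is 0 elsewhere, and π_y agrees with π on I_y and is the identity elsewhere. Then each π_y is a well-defined permutation, the elements τ₁, …, τ_z pairwise commute, and τ = τ₁·τ₂·⋯·τ_z. -/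

import Mathlib

open Finset Equiv

/-- `Qf n a b = ∑_{i < j} a i * b j`. -/
def Qf (n : ℕ) (a b : Fin n → ZMod 2) : ZMod 2 :=
  ∑ p ∈ Finset.univ.filter (fun p : Fin n × Fin n => p.1 < p.2), a p.1 * b p.2

/-- The underlying set of the group `H n`: pairs `(a, b)` with
`a : Fin n → ZMod 2` and `b : ZMod 2`. -/
@[ext] structure H (n : ℕ) where
  a : Fin n → ZMod 2
  b : ZMod 2

namespace H

variable {n : ℕ}

instance : Mul (H n) := ⟨fun x y => ⟨x.a + y.a, x.b + y.b + Qf n x.a y.a⟩⟩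
instance : One (H n) := ⟨⟨0, 0⟩⟩
instance : Inv (H n) := ⟨fun x => ⟨x.a, x.b + Qf n x.a x.a⟩⟩

@[simp] lemma mul_a (x y : H n) : (x * y).a = x.a + y.a := rfl
@[simp] lemma mul_b (x y : H n) : (x * y).b = x.b + y.b + Qf n x.a y.a := rfl
@[simp] lemma one_a : (1 : H n).a = 0 := rfl
@[simp] lemma one_b : (1 : H n).b = 0 := rfl
@[simp] lemma inv_a (x : H n) : (x⁻¹).a = x.a := rfl
@[simp] lemma inv_b (x : H n) : (x⁻¹).b = x.b + Qf n x.a x.a := rfl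

lemma Qf_add_left (a a' b : Fin n → ZMod 2) :
    Qf n (a + a') b = Qf n a b + Qf n a' b := by
  simp [Qf, add_mul, Finset.sum_add_distrib]

lemma Qf_add_right (a b b' : Fin n → ZMod 2) :
    Qf n a (b + b') = Qf n a b + Qf n a b' := by
  simp [Qf, mul_add, Finset.sum_add_distrib]

@[simp] lemma Qf_zero_left (b : Fin n → ZMod 2) : Qf n 0 b = 0 := by simp [Qf]
@[simp] lemma Qf_zero_right (a : Fin n → ZMod 2) : Qf n a 0 = 0 := by simp [Qf]

instance : Group (H n) where
  mul_assoc x y z := by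
    ext i
    · simp [add_assoc]
    · simp only [mul_b, mul_a, Qf_add_left, Qf_add_right]
      ring
  one_mul x := by ext i <;> simp
  mul_one x := by ext i <;> simp
  inv_mul_cancel x := by
    ext i
    · show x.a i + x.a i = 0
      generalize x.a i = u; revert u; decide
    · show x.b + Qf n x.a x.a + x.b + Qf n x.a x.a = 0
      generalize x.b = u; generalize Qf n x.a x.a = q
      revert u q; decide

end H

/-- The generator `x_i = (e_i, 0)` of `H n`. -/
def xgen (n : ℕ) (i : Fin n) : H n := ⟨Pi.single i 1, 0⟩

/-- The central element `ε = (0, 1)` of `H n`. -/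
def eps (n : ℕ) : H n := ⟨0, 1⟩

/-- `Rf n σ a = ∑_{i < j, σ i > σ j} a i * a j`. -/
def Rf (n : ℕ) (σ : Equiv.Perm (Fin n)) (a : Fin n → ZMod 2) : ZMod 2 :=
  ∑ p ∈ Finset.univ.filter
      (fun p : Fin n × Fin n => p.1 < p.2 ∧ σ p.2 < σ p.1), a p.1 * a p.2

/-- The action of `σ ∈ Sₙ` on `H n`:
`σ · (a, b) = (a ∘ σ⁻¹, b + ∑_{i<j, σ i > σ j} a i * a j)`. -/
def actH (n : ℕ) (σ : Equiv.Perm (Fin n)) (g : H n) : H n :=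
  ⟨g.a ∘ σ.symm, g.b + Rf n σ g.a⟩

section Lemmas

open Finset Equiv

variable {n : ℕ}

private lemma two_cancel : ∀ x : ZMod 2, x + x = 0 := by decide

/-- Reindexing a pair-sum by a permutation acting diagonally. -/
private lemma sum_pair_perm (τ : Equiv.Perm (Fin n)) (c : Fin n × Fin n → Prop)
    [DecidablePred c] (f : Fin n → Fin n → ZMod 2) :
    ∑ p ∈ Finset.univ.filter (fun p : Fin n × Fin n => c (τ p.1, τ p.2)), f (τ p.1) (τ p.2)
      = ∑ p ∈ Finset.univ.filter c, f p.1 p.2 := by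
  apply Finset.sum_equiv (Equiv.prodCongr τ τ) <;> simp

/-- Reindexing a pair-sum by the swap. -/
private lemma sum_pair_swap (c : Fin n × Fin n → Prop)
    [DecidablePred c] (f : Fin n → Fin n → ZMod 2) :
    ∑ p ∈ Finset.univ.filter c, f p.1 p.2
      = ∑ p ∈ Finset.univ.filter (fun p : Fin n × Fin n => c (p.2, p.1)), f p.2 p.1 := by
  apply Finset.sum_equiv (Equiv.prodComm (Fin n) (Fin n)) <;> simp

end Lemmas

section Lemmas2

open Finset Equiv

variable {n : ℕ}

private lemma flip_lt {x y : Fin n} (hne : x ≠ y) : ¬ x < y ↔ y < x :=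
  ⟨fun h => lt_of_le_of_ne (not_lt.mp h) hne.symm, fun h h' => absurd h' (asymm h)⟩

private lemma Rf_add (σ : Equiv.Perm (Fin n)) (a b : Fin n → ZMod 2) :
    Rf n σ (a + b) = Rf n σ a + Rf n σ b
      + ∑ p ∈ Finset.univ.filter (fun p : Fin n × Fin n => p.1 < p.2 ∧ σ p.2 < σ p.1),
          (a p.1 * b p.2 + b p.1 * a p.2) := by
  simp only [Rf, ← Finset.sum_add_distrib]
  apply Finset.sum_congr rfl
  intro p _
  simp only [Pi.add_apply]
  ring

private lemma Qf_act (σ : Equiv.Perm (Fin n)) (a b : Fin n → ZMod 2) :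
    Qf n (a ∘ σ.symm) (b ∘ σ.symm)
      = Qf n a b
        + ∑ p ∈ Finset.univ.filter (fun p : Fin n × Fin n => p.1 < p.2 ∧ σ p.2 < σ p.1),
            (a p.1 * b p.2 + b p.1 * a p.2) := by
  classical
  have h1 : Qf n (a ∘ σ.symm) (b ∘ σ.symm)
      = ∑ p ∈ Finset.univ.filter (fun p : Fin n × Fin n => σ p.1 < σ p.2),
          a p.1 * b p.2 := by
    rw [Qf]
    apply Finset.sum_equiv (Equiv.prodCongr σ.symm σ.symm) <;> simp
  have h2 : ∑ p ∈ Finset.univ.filter (fun p : Fin n × Fin n => σ p.1 < σ p.2), a p.1 * b p.2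
      = ∑ p ∈ Finset.univ.filter
            (fun p : Fin n × Fin n => σ p.1 < σ p.2 ∧ p.1 < p.2), a p.1 * b p.2
        + ∑ p ∈ Finset.univ.filter
            (fun p : Fin n × Fin n => σ p.1 < σ p.2 ∧ p.2 < p.1), a p.1 * b p.2 := by
    rw [← Finset.sum_filter_add_sum_filter_not
      (Finset.univ.filter (fun p : Fin n × Fin n => σ p.1 < σ p.2))
      (fun p : Fin n × Fin n => p.1 < p.2)]
    congr 1
    · rw [Finset.filter_filter]
    · rw [Finset.filter_filter]
      refine Finset.sum_congr (Finset.filter_congr ?_) (fun _ _ => rfl)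
      intro p _
      constructor
      · rintro ⟨h1', h2'⟩
        have hne : p.1 ≠ p.2 := fun h => absurd (h ▸ h1' : σ p.1 < σ p.1) (lt_irrefl _)
        exact ⟨h1', (flip_lt hne).mp h2'⟩
      · rintro ⟨h1', h2'⟩
        exact ⟨h1', fun h => absurd h (asymm h2')⟩
  have h3 : ∑ p ∈ Finset.univ.filter
        (fun p : Fin n × Fin n => σ p.1 < σ p.2 ∧ p.2 < p.1), a p.1 * b p.2
      = ∑ p ∈ Finset.univ.filter
            (fun p : Fin n × Fin n => p.1 < p.2 ∧ σ p.2 < σ p.1), b p.1 * a p.2 := by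
    rw [sum_pair_swap (fun p : Fin n × Fin n => σ p.1 < σ p.2 ∧ p.2 < p.1)
      (fun i j => a i * b j)]
    refine Finset.sum_congr (Finset.filter_congr ?_) ?_
    · intro p _
      exact ⟨fun h => ⟨h.2, h.1⟩, fun h => ⟨h.2, h.1⟩⟩
    · intro p _; ring
  have h4 : Qf n a b
      = ∑ p ∈ Finset.univ.filter
            (fun p : Fin n × Fin n => σ p.1 < σ p.2 ∧ p.1 < p.2), a p.1 * b p.2
        + ∑ p ∈ Finset.univ.filter
            (fun p : Fin n × Fin n => p.1 < p.2 ∧ σ p.2 < σ p.1), a p.1 * b p.2 := by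
    rw [Qf, ← Finset.sum_filter_add_sum_filter_not
      (Finset.univ.filter (fun p : Fin n × Fin n => p.1 < p.2))
      (fun p : Fin n × Fin n => σ p.1 < σ p.2)]
    congr 1
    · rw [Finset.filter_filter]
      refine Finset.sum_congr (Finset.filter_congr ?_) (fun _ _ => rfl)
      intro p _
      exact ⟨fun h => ⟨h.2, h.1⟩, fun h => ⟨h.2, h.1⟩⟩
    · rw [Finset.filter_filter]
      refine Finset.sum_congr (Finset.filter_congr ?_) (fun _ _ => rfl)
      intro p _
      constructor
      · rintro ⟨h1', h2'⟩
        have hne : σ p.1 ≠ σ p.2 := fun h =>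
          absurd h1' (by rw [σ.injective h]; exact lt_irrefl _)
        exact ⟨h1', (flip_lt hne).mp h2'⟩
      · rintro ⟨h1', h2'⟩
        exact ⟨h1', fun h => absurd h (asymm h2')⟩
  have h5 : ∑ p ∈ Finset.univ.filter
        (fun p : Fin n × Fin n => p.1 < p.2 ∧ σ p.2 < σ p.1),
          (a p.1 * b p.2 + b p.1 * a p.2)
      = ∑ p ∈ Finset.univ.filter
            (fun p : Fin n × Fin n => p.1 < p.2 ∧ σ p.2 < σ p.1), a p.1 * b p.2
        + ∑ p ∈ Finset.univ.filter
            (fun p : Fin n × Fin n => p.1 < p.2 ∧ σ p.2 < σ p.1), b p.1 * a p.2 :=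
    Finset.sum_add_distrib
  rw [h1, h2, h3, h4, h5]
  have h6 := two_cancel (∑ p ∈ Finset.univ.filter
      (fun p : Fin n × Fin n => p.1 < p.2 ∧ σ p.2 < σ p.1), a p.1 * b p.2)
  linear_combination -h6

end Lemmas2

section Lemmas3

open Finset Equiv

variable {n : ℕ}

private lemma Rf_comp (σ τ : Equiv.Perm (Fin n)) (a : Fin n → ZMod 2) :
    Rf n (σ * τ) a = Rf n τ a + Rf n σ (a ∘ τ.symm) := by
  classical
  -- rewrite `Rf (σ * τ)`
  have hA : Rf n (σ * τ) a
      = ∑ p ∈ Finset.univ.filter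
          (fun p : Fin n × Fin n => p.1 < p.2 ∧ σ (τ p.2) < σ (τ p.1)), a p.1 * a p.2 := by
    rw [Rf]
    refine Finset.sum_congr (Finset.filter_congr ?_) (fun _ _ => rfl)
    intro p _
    simp [Equiv.Perm.mul_apply]
  -- split it according to the relative order of `τ p.1`, `τ p.2`
  have hB : ∑ p ∈ Finset.univ.filter
        (fun p : Fin n × Fin n => p.1 < p.2 ∧ σ (τ p.2) < σ (τ p.1)), a p.1 * a p.2
      = ∑ p ∈ Finset.univ.filter
            (fun p : Fin n × Fin n =>
              (p.1 < p.2 ∧ σ (τ p.2) < σ (τ p.1)) ∧ τ p.1 < τ p.2), a p.1 * a p.2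
        + ∑ p ∈ Finset.univ.filter
            (fun p : Fin n × Fin n =>
              (p.1 < p.2 ∧ σ (τ p.2) < σ (τ p.1)) ∧ τ p.2 < τ p.1), a p.1 * a p.2 := by
    rw [← Finset.sum_filter_add_sum_filter_not
      (Finset.univ.filter
        (fun p : Fin n × Fin n => p.1 < p.2 ∧ σ (τ p.2) < σ (τ p.1)))
      (fun p : Fin n × Fin n => τ p.1 < τ p.2)]
    congr 1
    · rw [Finset.filter_filter]
    · rw [Finset.filter_filter]
      refine Finset.sum_congr (Finset.filter_congr ?_) (fun _ _ => rfl)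
      intro p _
      constructor
      · rintro ⟨h1, h2⟩
        have hne : τ p.1 ≠ τ p.2 := fun h => absurd h1.1 (by
          have := τ.injective h; rw [this]; exact lt_irrefl _)
        exact ⟨h1, (flip_lt hne).mp h2⟩
      · rintro ⟨h1, h2⟩
        exact ⟨h1, fun h => absurd h (asymm h2)⟩
  -- split `Rf τ a` according to the relative order of `στ p.1`, `στ p.2`
  have hC : Rf n τ a
      = ∑ p ∈ Finset.univ.filter
            (fun p : Fin n × Fin n =>
              (p.1 < p.2 ∧ τ p.2 < τ p.1) ∧ σ (τ p.1) < σ (τ p.2)), a p.1 * a p.2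
        + ∑ p ∈ Finset.univ.filter
            (fun p : Fin n × Fin n =>
              (p.1 < p.2 ∧ σ (τ p.2) < σ (τ p.1)) ∧ τ p.2 < τ p.1), a p.1 * a p.2 := by
    rw [Rf, ← Finset.sum_filter_add_sum_filter_not
      (Finset.univ.filter
        (fun p : Fin n × Fin n => p.1 < p.2 ∧ τ p.2 < τ p.1))
      (fun p : Fin n × Fin n => σ (τ p.1) < σ (τ p.2))]
    congr 1
    · rw [Finset.filter_filter]
    · rw [Finset.filter_filter]
      refine Finset.sum_congr (Finset.filter_congr ?_) (fun _ _ => rfl)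
      intro p _
      constructor
      · rintro ⟨h1, h2⟩
        have hne : σ (τ p.1) ≠ σ (τ p.2) := fun h => absurd h1.2 (by
          have := σ.injective h; rw [this]; exact lt_irrefl _)
        exact ⟨⟨h1.1, (flip_lt hne).mp h2⟩, h1.2⟩
      · rintro ⟨h1, h2⟩
        exact ⟨⟨h1.1, h2⟩, fun h => absurd h (asymm h1.2)⟩
  -- reindex `Rf σ (a ∘ τ.symm)` and split according to the order of `p.1`, `p.2`
  have hD : Rf n σ (a ∘ τ.symm)
      = ∑ p ∈ Finset.univ.filter
          (fun p : Fin n × Fin n => τ p.1 < τ p.2 ∧ σ (τ p.2) < σ (τ p.1)),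
            a p.1 * a p.2 := by
    rw [Rf]
    apply Finset.sum_equiv (Equiv.prodCongr τ.symm τ.symm) <;> simp
  have hE : ∑ p ∈ Finset.univ.filter
        (fun p : Fin n × Fin n => τ p.1 < τ p.2 ∧ σ (τ p.2) < σ (τ p.1)), a p.1 * a p.2
      = ∑ p ∈ Finset.univ.filter
            (fun p : Fin n × Fin n =>
              (p.1 < p.2 ∧ σ (τ p.2) < σ (τ p.1)) ∧ τ p.1 < τ p.2), a p.1 * a p.2
        + ∑ p ∈ Finset.univ.filter
            (fun p : Fin n × Fin n =>
              (τ p.1 < τ p.2 ∧ σ (τ p.2) < σ (τ p.1)) ∧ p.2 < p.1), a p.1 * a p.2 := by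
    rw [← Finset.sum_filter_add_sum_filter_not
      (Finset.univ.filter
        (fun p : Fin n × Fin n => τ p.1 < τ p.2 ∧ σ (τ p.2) < σ (τ p.1)))
      (fun p : Fin n × Fin n => p.1 < p.2)]
    congr 1
    · rw [Finset.filter_filter]
      refine Finset.sum_congr (Finset.filter_congr ?_) (fun _ _ => rfl)
      intro p _
      exact ⟨fun h => ⟨⟨h.2, h.1.2⟩, h.1.1⟩, fun h => ⟨⟨h.2, h.1.2⟩, h.1.1⟩⟩
    · rw [Finset.filter_filter]
      refine Finset.sum_congr (Finset.filter_congr ?_) (fun _ _ => rfl)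
      intro p _
      constructor
      · rintro ⟨h1, h2⟩
        have hne : p.1 ≠ p.2 := fun h => absurd h1.1 (by rw [h]; exact lt_irrefl _)
        exact ⟨h1, (flip_lt hne).mp h2⟩
      · rintro ⟨h1, h2⟩
        exact ⟨h1, fun h => absurd h (asymm h2)⟩
  -- swap the second piece of `hE`
  have hF : ∑ p ∈ Finset.univ.filter
        (fun p : Fin n × Fin n =>
          (τ p.1 < τ p.2 ∧ σ (τ p.2) < σ (τ p.1)) ∧ p.2 < p.1), a p.1 * a p.2
      = ∑ p ∈ Finset.univ.filter
            (fun p : Fin n × Fin n =>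
              (p.1 < p.2 ∧ τ p.2 < τ p.1) ∧ σ (τ p.1) < σ (τ p.2)), a p.1 * a p.2 := by
    rw [sum_pair_swap
      (fun p : Fin n × Fin n => (τ p.1 < τ p.2 ∧ σ (τ p.2) < σ (τ p.1)) ∧ p.2 < p.1)
      (fun i j => a i * a j)]
    refine Finset.sum_congr (Finset.filter_congr ?_) ?_
    · intro p _
      exact ⟨fun h => ⟨⟨h.2, h.1.1⟩, h.1.2⟩, fun h => ⟨⟨h.1.2, h.2⟩, h.1.1⟩⟩
    · intro p _; ring
  rw [hA, hB, hC, hD, hE, hF]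
  have h6 := two_cancel (∑ p ∈ Finset.univ.filter
      (fun p : Fin n × Fin n =>
        (p.1 < p.2 ∧ τ p.2 < τ p.1) ∧ σ (τ p.1) < σ (τ p.2)), a p.1 * a p.2)
  linear_combination -h6

end Lemmas3

/-- The group `G n = H n ⋊ Sₙ` (the semidirect product for the action `actH`). -/
@[ext] structure G (n : ℕ) where
  h : H n
  s : Equiv.Perm (Fin n)

section ActLemmas

open Finset Equiv

variable {n : ℕ}

private lemma actH_mul (σ : Equiv.Perm (Fin n)) (g h : H n) :
    actH n σ (g * h) = actH n σ g * actH n σ h := by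
  refine H.ext ?_ ?_
  · funext i; rfl
  · show (g.b + h.b + Qf n g.a h.a) + Rf n σ (g.a + h.a)
       = (g.b + Rf n σ g.a) + (h.b + Rf n σ h.a) + Qf n (g.a ∘ σ.symm) (h.a ∘ σ.symm)
    rw [Rf_add, Qf_act]
    ring

private lemma actH_one_perm (g : H n) : actH n (1 : Equiv.Perm (Fin n)) g = g := by
  refine H.ext ?_ ?_
  · funext i; rfl
  · show g.b + Rf n 1 g.a = g.b
    have h0 : Rf n (1 : Equiv.Perm (Fin n)) g.a = 0 := by
      rw [Rf, Finset.filter_false_of_mem, Finset.sum_empty]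
      rintro p _ ⟨h1, h2⟩
      exact absurd h2 (asymm h1)
    rw [h0, add_zero]

private lemma actH_H_one (σ : Equiv.Perm (Fin n)) : actH n σ (1 : H n) = 1 := by
  refine H.ext ?_ ?_
  · funext i; rfl
  · show (0 : ZMod 2) + Rf n σ (0 : Fin n → ZMod 2) = 0
    simp [Rf]

private lemma actH_comp (σ τ : Equiv.Perm (Fin n)) (g : H n) :
    actH n (σ * τ) g = actH n σ (actH n τ g) := by
  refine H.ext ?_ ?_
  · funext i; rfl
  · show g.b + Rf n (σ * τ) g.a = (g.b + Rf n τ g.a) + Rf n σ (g.a ∘ τ.symm)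
    rw [Rf_comp]
    ring

end ActLemmas

namespace G

variable {n : ℕ}

instance : Mul (G n) := ⟨fun x y => ⟨x.h * actH n x.s y.h, x.s * y.s⟩⟩
instance : One (G n) := ⟨⟨1, 1⟩⟩
instance : Inv (G n) := ⟨fun x => ⟨actH n x.s⁻¹ x.h⁻¹, x.s⁻¹⟩⟩

@[simp] lemma mul_h (x y : G n) : (x * y).h = x.h * actH n x.s y.h := rfl
@[simp] lemma mul_s (x y : G n) : (x * y).s = x.s * y.s := rfl
@[simp] lemma one_h : (1 : G n).h = 1 := rfl
@[simp] lemma one_s : (1 : G n).s = 1 := rfl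

instance : Group (G n) where
  mul_assoc x y z := by
    refine G.ext ?_ ?_
    · show (x.h * actH n x.s y.h) * actH n (x.s * y.s) z.h
         = x.h * actH n x.s (y.h * actH n y.s z.h)
      rw [actH_mul, ← actH_comp]
      exact mul_assoc _ _ _
    · exact mul_assoc x.s y.s z.s
  one_mul x := by
    refine G.ext ?_ ?_
    · show (1 : H n) * actH n 1 x.h = x.h
      rw [actH_one_perm, one_mul]
    · exact one_mul x.s
  mul_one x := by
    refine G.ext ?_ ?_
    · show x.h * actH n x.s 1 = x.h
      rw [actH_H_one, mul_one]
    · exact mul_one x.s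
  inv_mul_cancel x := by
    refine G.ext ?_ ?_
    · show actH n x.s⁻¹ x.h⁻¹ * actH n x.s⁻¹ x.h = 1
      rw [← actH_mul, inv_mul_cancel, actH_H_one]
    · exact inv_mul_cancel x.s

end G

/-- The hyperoctahedral group `B n = (ZMod 2)ⁿ ⋊ Sₙ`, with
`(a₁, π₁) * (a₂, π₂) = (a₁ + a₂ ∘ π₁⁻¹, π₁ * π₂)`. -/
@[ext] structure B (n : ℕ) where
  a : Fin n → ZMod 2
  s : Equiv.Perm (Fin n)

namespace B

variable {n : ℕ}

instance : Mul (B n) := ⟨fun x y => ⟨x.a + y.a ∘ x.s.symm, x.s * y.s⟩⟩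
instance : One (B n) := ⟨⟨0, 1⟩⟩
instance : Inv (B n) := ⟨fun x => ⟨x.a ∘ x.s, x.s⁻¹⟩⟩

@[simp] lemma mul_a (x y : B n) : (x * y).a = x.a + y.a ∘ x.s.symm := rfl
@[simp] lemma mul_s (x y : B n) : (x * y).s = x.s * y.s := rfl
@[simp] lemma one_a : (1 : B n).a = 0 := rfl
@[simp] lemma one_s : (1 : B n).s = 1 := rfl

instance : Group (B n) where
  mul_assoc x y z := by
    refine B.ext ?_ ?_
    · funext i
      show x.a i + y.a (x.s.symm i) + z.a (y.s.symm (x.s.symm i))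
         = x.a i + (y.a (x.s.symm i) + z.a (y.s.symm (x.s.symm i)))
      exact add_assoc _ _ _
    · exact mul_assoc x.s y.s z.s
  one_mul x := by
    refine B.ext ?_ ?_
    · funext i
      show (0 : ZMod 2) + x.a i = x.a i
      exact zero_add _
    · exact one_mul x.s
  mul_one x := by
    refine B.ext ?_ ?_
    · funext i
      show x.a i + (0 : ZMod 2) = x.a i
      exact add_zero _
    · exact mul_one x.s
  inv_mul_cancel x := by
    refine B.ext ?_ ?_
    · funext i
      show x.a (x.s i) + x.a ((x.s⁻¹).symm i) = 0
      have h : (x.s⁻¹).symm i = x.s i := rfl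
      rw [h]
      generalize x.a (x.s i) = u; revert u; decide
    · exact inv_mul_cancel x.s

end B

/-- The projection `p : G n → B n`, `((a, b), σ) ↦ (a, σ)`. -/
def pG (n : ℕ) (g : G n) : B n := ⟨g.h.a, g.s⟩

/-- The central element `ε̂ = ((0,1), 1)` of `G n`. -/
def epsG (n : ℕ) : G n := ⟨⟨0, 1⟩, 1⟩

/-- The orbit of `k` under the cyclic group generated by `σ`, as a `Finset`. -/
noncomputable def orb (n : ℕ) (σ : Equiv.Perm (Fin n)) (k : Fin n) : Finset (Fin n) :=
  letI := Classical.decPred fun j : Fin n => ∃ m : ℤ, (σ ^ m) k = j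
  Finset.univ.filter (fun j => ∃ m : ℤ, (σ ^ m) k = j)

/-- The set of orbits of `σ` on `Fin n`. -/
noncomputable def orbs (n : ℕ) (σ : Equiv.Perm (Fin n)) : Finset (Finset (Fin n)) :=
  Finset.univ.image (orb n σ)

/-- The orbit of `k` under the group generated by the commuting permutations `σ` and `π`;
it is the union of the `σ`-orbits belonging to the orbit (under the action of the group
generated by `π` on the set of `σ`-orbits) of the `σ`-orbit of `k`. -/
noncomputable def orb2 (n : ℕ) (σ π : Equiv.Perm (Fin n)) (k : Fin n) : Finset (Fin n) :=
  letI := Classical.decPred fun j : Fin n => ∃ a b : ℤ, (σ ^ a * π ^ b) k = j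
  Finset.univ.filter (fun j => ∃ a b : ℤ, (σ ^ a * π ^ b) k = j)

/-- The set of orbits of the group generated by `σ` and `π` on `Fin n`. -/
noncomputable def orbs2 (n : ℕ) (σ π : Equiv.Perm (Fin n)) : Finset (Finset (Fin n)) :=
  Finset.univ.image (orb2 n σ π)

section Restrict

open Finset Equiv

variable {n : ℕ}

/-- The permutation agreeing with `π` on `I` (assumed invariant) and identity elsewhere. -/
noncomputable def restrictPerm (n : ℕ) (π : Equiv.Perm (Fin n)) (I : Finset (Fin n)) :
    Equiv.Perm (Fin n) :=
  if h : ∀ i ∈ I, π i ∈ I then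
    Equiv.ofBijective (fun i => if i ∈ I then π i else i) (by
      rw [← Finite.injective_iff_bijective]
      intro i j hij
      by_cases hi : i ∈ I <;> by_cases hj : j ∈ I <;>
        simp only [hi, hj, if_pos, if_neg, if_true, if_false] at hij
      · exact π.injective hij
      · rw [← hij] at hj; exact absurd (h i hi) hj
      · rw [hij] at hi; exact absurd (h j hj) hi
      · exact hij)
  else 1

lemma restrictPerm_apply {π : Equiv.Perm (Fin n)} {I : Finset (Fin n)}
    (hI : ∀ i ∈ I, π i ∈ I) (i : Fin n) :
    restrictPerm n π I i = if i ∈ I then π i else i := by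
  rw [restrictPerm, dif_pos hI]; rfl

lemma restrictPerm_apply_mem {π : Equiv.Perm (Fin n)} {I : Finset (Fin n)}
    (hI : ∀ i ∈ I, π i ∈ I) {i : Fin n} (hi : i ∈ I) :
    restrictPerm n π I i = π i := by
  rw [restrictPerm_apply hI, if_pos hi]

lemma restrictPerm_apply_not_mem {π : Equiv.Perm (Fin n)} {I : Finset (Fin n)}
    (hI : ∀ i ∈ I, π i ∈ I) {i : Fin n} (hi : i ∉ I) :
    restrictPerm n π I i = i := by
  rw [restrictPerm_apply hI, if_neg hi]

lemma restrictPerm_symm_not_mem {π : Equiv.Perm (Fin n)} {I : Finset (Fin n)}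
    (hI : ∀ i ∈ I, π i ∈ I) {i : Fin n} (hi : i ∉ I) :
    (restrictPerm n π I).symm i = i := by
  apply (restrictPerm n π I).injective
  rw [Equiv.apply_symm_apply, restrictPerm_apply_not_mem hI hi]

lemma restrictPerm_symm_mem {π : Equiv.Perm (Fin n)} {I : Finset (Fin n)}
    (hI : ∀ i ∈ I, π i ∈ I) {i : Fin n} (hi : i ∈ I) :
    (restrictPerm n π I).symm i ∈ I := by
  by_contra h
  have h2 := restrictPerm_apply_not_mem hI h
  rw [Equiv.apply_symm_apply] at h2
  rw [h2] at hi
  exact h hi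

end Restrict

/-- Let `σ ∈ Sₙ` and let `τ = (v, π) ∈ B n` commute with `(0, σ)`. The sets
`I₁, …, I_z` (unions of the `σ`-orbits in one orbit of `⟨π⟩` acting on `σ`-orbits, i.e.
the orbits of `⟨σ, π⟩` on `Fin n`, here `orbs2 n σ π`) partition `Fin n`; for each such
`I` the factor `τ_I = (v·𝟙_I, π_I)` is well defined (`π_I` agreeing with `π` on `I`,
identity elsewhere, is a permutation), the `τ_I` pairwise commute and `τ = ∏_I τ_I`. -/
theorem tau_factorization (n : ℕ) (hn : 0 < n) (σ : Equiv.Perm (Fin n))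
    (v : Fin n → ZMod 2) (π : Equiv.Perm (Fin n))
    (hc : Commute ((⟨0, σ⟩ : B n)) ⟨v, π⟩) :
    ∃ t : Finset (Fin n) → B n,
      (∀ I ∈ orbs2 n σ π, ∃ πI : Equiv.Perm (Fin n),
          (∀ i ∈ I, πI i = π i) ∧ (∀ i ∉ I, πI i = i) ∧
          t I = ⟨fun i => if i ∈ I then v i else 0, πI⟩) ∧
      (∀ I ∈ orbs2 n σ π, ∀ J ∈ orbs2 n σ π, Commute (t I) (t J)) ∧
      ∃ hcomm : (↑(orbs2 n σ π) : Set (Finset (Fin n))).Pairwise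
          (fun I J => Commute (t I) (t J)),
        (orbs2 n σ π).noncommProd t hcomm = (⟨v, π⟩ : B n) := by
  classical
  have hσπ : Commute σ π := congrArg B.s hc
  have hz : ∀ a b c d : ℤ, (σ ^ a * π ^ b) * (σ ^ c * π ^ d) = σ ^ (a + c) * π ^ (b + d) := by
    intro a b c d
    rw [zpow_add, zpow_add]
    exact (hσπ.symm.zpow_zpow b c).mul_mul_mul_comm _ _
  have hmem : ∀ k j : Fin n, j ∈ orb2 n σ π k ↔ ∃ a b : ℤ, (σ ^ a * π ^ b) k = j := by
    intro k j
    rw [orb2]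
    simp only [Finset.mem_filter, Finset.mem_univ, true_and]
  -- orbit lemmas
  have hself : ∀ k : Fin n, k ∈ orb2 n σ π k := by
    intro k; rw [hmem]; exact ⟨0, 0, by simp⟩
  have heq : ∀ k x : Fin n, x ∈ orb2 n σ π k → orb2 n σ π x = orb2 n σ π k := by
    intro k x hx
    rw [hmem] at hx
    obtain ⟨c, d, rfl⟩ := hx
    ext j
    rw [hmem, hmem]
    constructor
    · rintro ⟨a, b, rfl⟩
      exact ⟨a + c, b + d, by rw [← hz]; rfl⟩
    · rintro ⟨a, b, rfl⟩
      refine ⟨a - c, b - d, ?_⟩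
      rw [← Equiv.Perm.mul_apply, hz]
      simp
  have horbs : ∀ I ∈ orbs2 n σ π, ∃ k, orb2 n σ π k = I := by
    intro I hI
    rw [orbs2, Finset.mem_image] at hI
    obtain ⟨k, _, hk⟩ := hI
    exact ⟨k, hk⟩
  have hinv : ∀ I ∈ orbs2 n σ π, ∀ i ∈ I, π i ∈ I := by
    intro I hI i hi
    obtain ⟨k, rfl⟩ := horbs I hI
    rw [hmem] at hi ⊢
    obtain ⟨a, b, rfl⟩ := hi
    refine ⟨0 + a, 1 + b, ?_⟩
    rw [← hz]
    simp [Equiv.Perm.mul_apply]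
  have hdisj : ∀ I ∈ orbs2 n σ π, ∀ J ∈ orbs2 n σ π, I ≠ J → ∀ i ∈ I, i ∉ J := by
    intro I hI J hJ hne i hiI hiJ
    obtain ⟨k, rfl⟩ := horbs I hI
    obtain ⟨l, rfl⟩ := horbs J hJ
    exact hne ((heq k i hiI).symm.trans (heq l i hiJ))
  -- the factors
  set t : Finset (Fin n) → B n :=
    fun I => ⟨fun i => if i ∈ I then v i else 0, restrictPerm n π I⟩ with ht
  -- pairwise commutation
  have hcom : ∀ I ∈ orbs2 n σ π, ∀ J ∈ orbs2 n σ π, Commute (t I) (t J) := by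
    intro I hI J hJ
    by_cases hne : I = J
    · subst hne; exact Commute.refl _
    · have hIinv := hinv I hI
      have hJinv := hinv J hJ
      have hd1 := hdisj I hI J hJ hne
      have hd2 := hdisj J hJ I hI (Ne.symm hne)
      show t I * t J = t J * t I
      refine B.ext ?_ ?_
      · funext i
        show (if i ∈ I then v i else 0) +
            (if (restrictPerm n π I).symm i ∈ J then v ((restrictPerm n π I).symm i) else 0)
          = (if i ∈ J then v i else 0) +
            (if (restrictPerm n π J).symm i ∈ I then v ((restrictPerm n π J).symm i) else 0)
        by_cases hiI : i ∈ I
        · have h1 : (restrictPerm n π I).symm i ∉ J := hd1 _ (restrictPerm_symm_mem hIinv hiI)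
          have h2 : i ∉ J := hd1 i hiI
          rw [restrictPerm_symm_not_mem hJinv h2]
          simp [hiI, h1, h2]
        · rw [restrictPerm_symm_not_mem hIinv hiI]
          by_cases hiJ : i ∈ J
          · have h1 : (restrictPerm n π J).symm i ∉ I := hd2 _ (restrictPerm_symm_mem hJinv hiJ)
            simp [hiI, hiJ, h1]
          · rw [restrictPerm_symm_not_mem hJinv hiJ]
            simp [hiI, hiJ]
      · show restrictPerm n π I * restrictPerm n π J = restrictPerm n π J * restrictPerm n π I
        refine Equiv.ext fun i => ?_
        simp only [Equiv.Perm.mul_apply]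
        by_cases hiI : i ∈ I
        · have hiJ : i ∉ J := hd1 i hiI
          have hpi : π i ∉ J := hd1 _ (hIinv i hiI)
          rw [restrictPerm_apply_not_mem hJinv hiJ, restrictPerm_apply_mem hIinv hiI,
            restrictPerm_apply_not_mem hJinv hpi]
        · by_cases hiJ : i ∈ J
          · have hpi : π i ∉ I := hd2 _ (hJinv i hiJ)
            rw [restrictPerm_apply_not_mem hIinv hiI, restrictPerm_apply_mem hJinv hiJ,
              restrictPerm_apply_not_mem hIinv hpi]
          · simp [restrictPerm_apply_not_mem hIinv hiI, restrictPerm_apply_not_mem hJinv hiJ]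
  have hcomm : (↑(orbs2 n σ π) : Set (Finset (Fin n))).Pairwise
      (fun I J => Commute (t I) (t J)) :=
    fun I hI J hJ _ => hcom I hI J hJ
  -- the product computation, by induction on subsets of `orbs2`
  have hprod : ∀ S : Finset (Finset (Fin n)), S ⊆ orbs2 n σ π →
      ∀ h : (↑S : Set (Finset (Fin n))).Pairwise (fun I J => Commute (t I) (t J)),
      (∀ i, (S.noncommProd t h).a i = if i ∈ S.sup id then v i else 0) ∧
      (∀ i, (S.noncommProd t h).s i = if i ∈ S.sup id then π i else i) := by
    intro S
    induction S using Finset.induction_on with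
    | empty =>
      intro _ h
      simp [Finset.noncommProd_empty]
    | @insert I S' hIS' ih =>
      intro hsub h
      have hI : I ∈ orbs2 n σ π := hsub (Finset.mem_insert_self I S')
      have hsub' : S' ⊆ orbs2 n σ π := fun J hJ => hsub (Finset.mem_insert_of_mem hJ)
      have hIinv := hinv I hI
      have h' : (↑S' : Set (Finset (Fin n))).Pairwise (fun I J => Commute (t I) (t J)) :=
        h.mono (by simp only [Finset.coe_insert]; exact Set.subset_insert _ _)
      obtain ⟨iha, ihs⟩ := ih hsub' h'
      rw [Finset.noncommProd_insert_of_notMem S' I t h hIS']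
      have hmemsup : ∀ i : Fin n, i ∈ (insert I S').sup id ↔ i ∈ I ∨ i ∈ S'.sup id := by
        intro i
        rw [Finset.sup_insert]
        exact Finset.mem_union
      have hnotI : ∀ i ∈ S'.sup id, i ∉ I := by
        intro i hi
        rw [Finset.mem_sup] at hi
        obtain ⟨J, hJ, hiJ⟩ := hi
        exact hdisj J (hsub' hJ) I hI (fun hh => hIS' (hh ▸ hJ)) i hiJ
      constructor
      · intro i
        show (if i ∈ I then v i else 0) +
            (S'.noncommProd t _).a ((restrictPerm n π I).symm i)
          = if i ∈ (insert I S').sup id then v i else 0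
        by_cases hiI : i ∈ I
        · have h1 : (restrictPerm n π I).symm i ∈ I := restrictPerm_symm_mem hIinv hiI
          have h2 : (restrictPerm n π I).symm i ∉ S'.sup id := fun hh => hnotI _ hh h1
          rw [iha, if_neg h2, if_pos hiI, if_pos ((hmemsup i).2 (Or.inl hiI)), add_zero]
        · rw [restrictPerm_symm_not_mem hIinv hiI, iha, if_neg hiI, zero_add]
          by_cases hiS : i ∈ S'.sup id
          · rw [if_pos hiS, if_pos ((hmemsup i).2 (Or.inr hiS))]
          · rw [if_neg hiS, if_neg (fun hh => ?_)]
            rcases (hmemsup i).1 hh with h1 | h1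
            · exact hiI h1
            · exact hiS h1
      · intro i
        show restrictPerm n π I ((S'.noncommProd t h').s i)
          = if i ∈ (insert I S').sup id then π i else i
        by_cases hiS : i ∈ S'.sup id
        · have hπi : π i ∈ S'.sup id := by
            rw [Finset.mem_sup] at hiS ⊢
            obtain ⟨J, hJ, hiJ⟩ := hiS
            exact ⟨J, hJ, hinv J (hsub' hJ) i hiJ⟩
          rw [ihs, if_pos hiS, restrictPerm_apply_not_mem hIinv (hnotI _ hπi),
            if_pos ((hmemsup i).2 (Or.inr hiS))]
        · rw [ihs, if_neg hiS, restrictPerm_apply hIinv]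
          by_cases hiI : i ∈ I
          · rw [if_pos hiI, if_pos ((hmemsup i).2 (Or.inl hiI))]
          · rw [if_neg hiI, if_neg (fun hh => ?_)]
            rcases (hmemsup i).1 hh with h1 | h1
            · exact hiI h1
            · exact hiS h1
  -- assemble
  refine ⟨t, ?_, hcom, hcomm, ?_⟩
  · intro I hI
    exact ⟨restrictPerm n π I, fun i hi => restrictPerm_apply_mem (hinv I hI) hi,
      fun i hi => restrictPerm_apply_not_mem (hinv I hI) hi, rfl⟩
  · obtain ⟨ha, hs⟩ := hprod (orbs2 n σ π) (le_refl _) hcomm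
    have hall : ∀ i : Fin n, i ∈ (orbs2 n σ π).sup id := by
      intro i
      rw [Finset.mem_sup]
      exact ⟨orb2 n σ π i, Finset.mem_image_of_mem _ (Finset.mem_univ i), hself i⟩
    refine B.ext ?_ ?_
    · funext i
      rw [ha i, if_pos (hall i)]
    · refine Equiv.ext fun i => ?_
      rw [hs i, if_pos (hall i)]
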